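/- Let d ≥ 2, let q : {1,…,d}×{1,…,d} → ℂ take unimodular values with q(i,i) = 1 and q(i,j) = conj(q(j,i)), and let (X₁,…,X_d) be a q-commutative d-tuple of isometries on a complex Hilbert space H. Then there exist a complex Hilbert space K, an isometric linear embedding ι : H → K, and a q-commutative d-tuple of unitaries (Y₁,…,Y_d) on K such that Y_i ι = ι X_i for every i (so each Y_i extends X_i), and such that Y = Y₁Y₂⋯Y_d is the minimal unitary extension of X = X₁X₂⋯X_d, i.e., Y ι = ι X and K equals the closed linear span of ∪_{n≥0} Y^{*n} ι(H). -/

import Mathlib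

open ContinuousLinearMap

noncomputable section QExt

open UniformSpace ComplexConjugate

universe u

namespace QExt

variable {H : Type u} [NormedAddCommGroup H] [InnerProductSpace ℂ H] [CompleteSpace H]
variable {d : ℕ}

local notation "⟪" x ", " y "⟫" => @inner ℂ _ _ x y

structure QData (d : ℕ) (H : Type u) [NormedAddCommGroup H] [InnerProductSpace ℂ H]
    [CompleteSpace H] where
  q : Fin d → Fin d → ℂ
  X : Fin d → H →L[ℂ] H
  hq_mod : ∀ i j, ‖q i j‖ = 1
  hq_diag : ∀ i, q i i = 1
  hq_conj : ∀ i j, q i j = starRingEnd ℂ (q j i)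
  hiso : ∀ i, adjoint (X i) ∘L X i = 1
  hcomm : ∀ i j, X i ∘L X j = q i j • (X j ∘L X i)

variable (S : QData d H)

/-- The product `X₁ ⋯ X_d`. -/
def Xp : H →L[ℂ] H := (List.ofFn S.X).prod

/-- `λ i = ∏ j, q i j`. -/
def lam (i : Fin d) : ℂ := ∏ j, S.q i j

lemma normX (i : Fin d) (h : H) : ‖S.X i h‖ = ‖h‖ :=
  (norm_map_iff_adjoint_comp_self (S.X i)).2 (S.hiso i) h

lemma norm_list_prod (l : List (Fin d)) (h : H) : ‖(l.map S.X).prod h‖ = ‖h‖ := by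
  induction l with
  | nil => simp
  | cons a t ih => simp only [List.map_cons, List.prod_cons, ContinuousLinearMap.mul_apply]
                   rw [normX, ih]

lemma normXp (h : H) : ‖Xp S h‖ = ‖h‖ := by
  rw [Xp, List.ofFn_eq_map]; exact norm_list_prod S _ h

lemma normXp_pow (k : ℕ) (h : H) : ‖(Xp S ^ k) h‖ = ‖h‖ := by
  induction k with
  | zero => simp
  | succ n ih => rw [pow_succ', ContinuousLinearMap.mul_apply, normXp, ih]

lemma inner_Xp_pow (k : ℕ) (a b : H) : ⟪(Xp S ^ k) a, (Xp S ^ k) b⟫ = ⟪a, b⟫ :=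
  (inner_map_map_iff_adjoint_comp_self (Xp S ^ k)).2
    ((norm_map_iff_adjoint_comp_self (Xp S ^ k)).1 (normXp_pow S k)) a b

/-- The directed system of copies of `H` with connecting maps given by powers of `Xp`. -/
def sys : ∀ n m : ℕ, n ≤ m → H →ₗ[ℂ] H := fun n m _ =>
  ((Xp S ^ (m - n) : H →L[ℂ] H) : H →ₗ[ℂ] H)

/-- The algebraic direct limit. -/
abbrev VV (S : QData d H) : Type u := Module.DirectLimit (fun _ : ℕ => H) (sys S)

def emb (n : ℕ) : H →ₗ[ℂ] VV S := Module.DirectLimit.of ℂ ℕ (fun _ => H) (sys S) n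

lemma emb_of_le {n m : ℕ} (hnm : n ≤ m) (x : H) :
    emb S m ((Xp S ^ (m - n)) x) = emb S n x :=
  Module.DirectLimit.of_f (hij := hnm)

lemma emb_step (n : ℕ) (x : H) : emb S (n + 1) (Xp S x) = emb S n x := by
  have h1 : Xp S x = (Xp S ^ (n + 1 - n)) x := by simp
  rw [h1]; exact emb_of_le S (Nat.le_succ n) x

lemma emb_exists (v : VV S) : ∃ n x, emb S n x = v :=
  Module.DirectLimit.exists_of v

lemma pow_sub_apply {n j : ℕ} (hnj : n ≤ j) (k : H) :
    (Xp S ^ j) k = (Xp S ^ (j - n)) ((Xp S ^ n) k) := by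
  rw [← ContinuousLinearMap.mul_apply, ← pow_add, Nat.sub_add_cancel hnj]

/-- First-stage lift: `D1 m k (emb n h) = ⟪Xp^n k, Xp^m h⟫`. -/
def D1 (m : ℕ) (k : H) : VV S →ₗ[ℂ] ℂ :=
  Module.DirectLimit.lift ℂ ℕ (fun _ => H) (sys S)
    (fun n => (innerₛₗ ℂ ((Xp S ^ n) k)).comp ((Xp S ^ m : H →L[ℂ] H) : H →ₗ[ℂ] H))
    (by
      intro n j hnj x
      simp only [LinearMap.comp_apply, innerₛₗ_apply_apply, ContinuousLinearMap.coe_coe]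
      have h1 : (Xp S ^ j) k = (Xp S ^ (j - n)) ((Xp S ^ n) k) := pow_sub_apply S hnj k
      have h2 : (Xp S ^ m) ((sys S n j hnj) x) = (Xp S ^ (j - n)) ((Xp S ^ m) x) := by
        show (Xp S ^ m) ((Xp S ^ (j - n)) x) = _
        rw [← ContinuousLinearMap.mul_apply, ← ContinuousLinearMap.mul_apply,
          ← pow_add, ← pow_add, Nat.add_comm]
      rw [h1, h2, inner_Xp_pow])

lemma D1_emb (m : ℕ) (k : H) (n : ℕ) (h : H) :
    D1 S m k (emb S n h) = ⟪(Xp S ^ n) k, (Xp S ^ m) h⟫ :=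
  Module.DirectLimit.lift_of _ _ _

-- NEW PART BELOW

/-- `Dbar m k = conj ∘ D1 m k`, a conjugate-linear functional. -/
def Dbar (m : ℕ) (k : H) : VV S →ₛₗ[starRingEnd ℂ] ℂ :=
  (starRingEnd ℂ).toSemilinearMap.comp (D1 S m k)

lemma Dbar_emb (m : ℕ) (k : H) (n : ℕ) (h : H) :
    Dbar S m k (emb S n h) = ⟪(Xp S ^ m) h, (Xp S ^ n) k⟫ := by
  simp only [Dbar, LinearMap.comp_apply, RingHom.toSemilinearMap, LinearMap.coe_mk,
    AddHom.coe_mk, D1_emb]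
  exact inner_conj_symm _ _

/-- Second-stage lift. -/
def D2 : VV S →ₗ[ℂ] (VV S →ₛₗ[starRingEnd ℂ] ℂ) :=
  Module.DirectLimit.lift ℂ ℕ (fun _ => H) (sys S)
    (fun m =>
      { toFun := fun k => Dbar S m k
        map_add' := by
          intro k k'
          apply LinearMap.ext; intro v
          obtain ⟨n, h, rfl⟩ := emb_exists S v
          simp [Dbar_emb, inner_add_right]
        map_smul' := by
          intro c k
          apply LinearMap.ext; intro v
          obtain ⟨n, h, rfl⟩ := emb_exists S v
          simp [Dbar_emb, inner_smul_right] })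
    (by
      intro n j hnj x
      apply LinearMap.ext; intro v
      obtain ⟨m, h, rfl⟩ := emb_exists S v
      show Dbar S j (sys S n j hnj x) (emb S m h) = Dbar S n x (emb S m h)
      rw [Dbar_emb, Dbar_emb]
      show ⟪(Xp S ^ j) h, (Xp S ^ m) ((Xp S ^ (j - n)) x)⟫ = ⟪(Xp S ^ n) h, (Xp S ^ m) x⟫
      have e1 : (Xp S ^ j) h = (Xp S ^ (j - n)) ((Xp S ^ n) h) := pow_sub_apply S hnj h
      have e2 : (Xp S ^ m) ((Xp S ^ (j - n)) x) = (Xp S ^ (j - n)) ((Xp S ^ m) x) := by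
        rw [← ContinuousLinearMap.mul_apply, ← ContinuousLinearMap.mul_apply, ← pow_add,
          ← pow_add, Nat.add_comm]
      rw [e1, e2, inner_Xp_pow])

lemma D2_emb (m : ℕ) (k : H) (n : ℕ) (h : H) :
    D2 S (emb S m k) (emb S n h) = ⟪(Xp S ^ m) h, (Xp S ^ n) k⟫ := by
  show (D2 S (emb S m k)) (emb S n h) = _
  rw [show D2 S (emb S m k) = Dbar S m k from Module.DirectLimit.lift_of _ _ _, Dbar_emb]



/-- The inner product core on the direct limit. -/
def coreV : InnerProductSpace.Core ℂ (VV S) where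
  inner x y := D2 S y x
  conj_inner_symm x y := by
    obtain ⟨n, h, rfl⟩ := emb_exists S x
    obtain ⟨m, k, rfl⟩ := emb_exists S y
    show conj (D2 S (emb S n h) (emb S m k)) = D2 S (emb S m k) (emb S n h)
    rw [D2_emb, D2_emb, inner_conj_symm]
  re_inner_nonneg x := by
    obtain ⟨n, h, rfl⟩ := emb_exists S x
    show 0 ≤ RCLike.re (D2 S (emb S n h) (emb S n h))
    rw [D2_emb]
    exact inner_self_nonneg
  add_left x y z := by
    show D2 S z (x + y) = D2 S z x + D2 S z y
    exact map_add _ _ _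
  smul_left x y r := by
    show D2 S y (r • x) = conj r * D2 S y x
    rw [LinearMap.map_smulₛₗ]
    rfl
  definite x hx := by
    obtain ⟨n, h, rfl⟩ := emb_exists S x
    have h0 : D2 S (emb S n h) (emb S n h) = 0 := hx
    rw [D2_emb, inner_Xp_pow, inner_self_eq_zero] at h0
    rw [h0, map_zero]

lemma comm_list (i : Fin d) (l : List (Fin d)) :
    S.X i ∘L (l.map S.X).prod = (l.map (S.q i)).prod • ((l.map S.X).prod ∘L S.X i) := by
  induction l with
  | nil => simp [ContinuousLinearMap.one_def]
  | cons a t ih =>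
    simp only [List.map_cons, List.prod_cons]
    calc S.X i ∘L (S.X a * (t.map S.X).prod)
        = (S.X i ∘L S.X a) ∘L (t.map S.X).prod := by rw [ContinuousLinearMap.mul_def, comp_assoc]
      _ = (S.q i a • (S.X a ∘L S.X i)) ∘L (t.map S.X).prod := by rw [S.hcomm i a]
      _ = S.q i a • (S.X a ∘L (S.X i ∘L (t.map S.X).prod)) := by
            rw [ContinuousLinearMap.smul_comp, comp_assoc]
      _ = S.q i a • (S.X a ∘L ((t.map (S.q i)).prod • ((t.map S.X).prod ∘L S.X i))) := by rw [ih]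
      _ = (S.q i a * (t.map (S.q i)).prod) •
            ((S.X a * (t.map S.X).prod) ∘L S.X i) := by
            rw [ContinuousLinearMap.comp_smul, smul_smul, ContinuousLinearMap.mul_def, comp_assoc]

lemma lam_eq_list (i : Fin d) : lam S i = (List.ofFn (S.q i)).prod := by
  rw [lam, List.prod_ofFn]

lemma comm_lam (i : Fin d) : S.X i ∘L Xp S = lam S i • (Xp S ∘L S.X i) := by
  have h := comm_list S i (List.finRange d)
  simp only [← List.ofFn_eq_map] at h
  rw [Xp, h, ← lam_eq_list]

lemma comm_lam_pow (i : Fin d) (k : ℕ) :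
    S.X i ∘L (Xp S ^ k) = (lam S i) ^ k • ((Xp S ^ k) ∘L S.X i) := by
  induction k with
  | zero => simp [ContinuousLinearMap.one_def]
  | succ n ih =>
    calc S.X i ∘L Xp S ^ (n + 1) = (S.X i ∘L Xp S ^ n) ∘L Xp S := by
          rw [pow_succ, ContinuousLinearMap.mul_def, comp_assoc]
      _ = (lam S i) ^ n • ((Xp S ^ n) ∘L (S.X i ∘L Xp S)) := by
          rw [ih, ContinuousLinearMap.smul_comp, comp_assoc]
      _ = (lam S i) ^ n • ((Xp S ^ n) ∘L (lam S i • (Xp S ∘L S.X i))) := by rw [comm_lam]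
      _ = ((lam S i) ^ (n + 1)) • ((Xp S ^ (n + 1)) ∘L S.X i) := by
          rw [ContinuousLinearMap.comp_smul, smul_smul, ← pow_succ]
          congr 1

lemma lam_mul_conj (i : Fin d) : lam S i * conj (lam S i) = 1 := by
  have h1 : ‖lam S i‖ = 1 := by
    rw [lam]
    rw [norm_prod]
    simp [S.hq_mod]
  rw [Complex.mul_conj]
  norm_cast
  rw [Complex.normSq_eq_norm_sq, h1, one_pow]

/-- The twisted extension of `X i` to the direct limit. -/
def Tmap (i : Fin d) : VV S →ₗ[ℂ] VV S :=
  Module.DirectLimit.lift ℂ ℕ (fun _ => H) (sys S)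
    (fun n => (conj (lam S i)) ^ n • ((emb S n).comp ((S.X i : H →L[ℂ] H) : H →ₗ[ℂ] H)))
    (by
      intro n j hnj x
      simp only [LinearMap.smul_apply, LinearMap.comp_apply, ContinuousLinearMap.coe_coe]
      have e0 : S.X i ((sys S n j hnj) x) = (lam S i) ^ (j - n) • ((Xp S ^ (j - n)) (S.X i x)) := by
        show S.X i ((Xp S ^ (j - n)) x) = _
        rw [← ContinuousLinearMap.comp_apply, comm_lam_pow, ContinuousLinearMap.smul_apply,
          ContinuousLinearMap.comp_apply]
      rw [e0, map_smul, smul_smul, emb_of_le S hnj]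
      congr 1
      have hnle : n + (j - n) = j := Nat.add_sub_cancel' hnj
      calc conj (lam S i) ^ j * lam S i ^ (j - n)
          = (conj (lam S i) ^ n * conj (lam S i) ^ (j - n)) * lam S i ^ (j - n) := by
            rw [← pow_add, hnle]
        _ = conj (lam S i) ^ n * ((lam S i * conj (lam S i)) ^ (j - n)) := by
            ring
        _ = conj (lam S i) ^ n := by rw [lam_mul_conj, one_pow, mul_one])

lemma Tmap_emb (i : Fin d) (n : ℕ) (h : H) :
    Tmap S i (emb S n h) = (conj (lam S i)) ^ n • emb S n (S.X i h) :=
  Module.DirectLimit.lift_of _ _ _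

section Helpers

lemma unitary_list_prod {K : Type*} [NormedAddCommGroup K] [InnerProductSpace ℂ K]
    [CompleteSpace K] (l : List (K →L[ℂ] K))
    (hl : ∀ a ∈ l, adjoint a ∘L a = 1 ∧ a ∘L adjoint a = 1) :
    adjoint l.prod ∘L l.prod = 1 ∧ l.prod ∘L adjoint l.prod = 1 := by
  induction l with
  | nil => simp [List.prod_nil, ContinuousLinearMap.one_def, adjoint_id]
  | cons a t ih =>
    obtain ⟨ha1, ha2⟩ := hl a List.mem_cons_self
    obtain ⟨ht1, ht2⟩ := ih (fun b hb => hl b (List.mem_cons_of_mem a hb))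
    have ha1p : ∀ x, adjoint a (a x) = x := fun x => by
      have := congrArg (fun B : K →L[ℂ] K => B x) ha1; simpa using this
    have ha2p : ∀ x, a (adjoint a x) = x := fun x => by
      have := congrArg (fun B : K →L[ℂ] K => B x) ha2; simpa using this
    have ht1p : ∀ x, adjoint t.prod (t.prod x) = x := fun x => by
      have := congrArg (fun B : K →L[ℂ] K => B x) ht1; simpa using this
    have ht2p : ∀ x, t.prod (adjoint t.prod x) = x := fun x => by
      have := congrArg (fun B : K →L[ℂ] K => B x) ht2; simpa using this
    have hadj : adjoint (a * t.prod) = adjoint t.prod ∘L adjoint a := by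
      rw [ContinuousLinearMap.mul_def, adjoint_comp]
    constructor
    · rw [List.prod_cons, hadj]
      ext x
      simp only [comp_apply, ContinuousLinearMap.mul_apply, ContinuousLinearMap.one_apply]
      rw [ha1p, ht1p]
    · rw [List.prod_cons, hadj]
      ext x
      simp only [comp_apply, ContinuousLinearMap.mul_apply, ContinuousLinearMap.one_apply]
      rw [ht2p, ha2p]

end Helpers

lemma exists_extract (i : Fin d) :
    ∃ (c : ℂ) (W : H →L[ℂ] H), Xp S = c • (S.X i ∘L W) := by
  suffices h : ∀ l : List (Fin d), i ∈ l →
      ∃ (c : ℂ) (W : H →L[ℂ] H), (l.map S.X).prod = c • (S.X i ∘L W) by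
    obtain ⟨c, W, hcW⟩ := h (List.finRange d) (List.mem_finRange i)
    exact ⟨c, W, by rw [Xp, List.ofFn_eq_map, hcW]⟩
  intro l hl
  induction l with
  | nil => simp at hl
  | cons a t ih =>
    by_cases hia : i = a
    · subst hia
      exact ⟨1, (t.map S.X).prod, by simp [List.prod_cons, ContinuousLinearMap.mul_def]⟩
    · have hit : i ∈ t := by
        rcases List.mem_cons.1 hl with h | h
        · exact absurd h hia
        · exact h
      obtain ⟨c, W, hcW⟩ := ih hit
      refine ⟨c * S.q a i, S.X a ∘L W, ?_⟩
      rw [List.map_cons, List.prod_cons, ContinuousLinearMap.mul_def, hcW, ContinuousLinearMap.comp_smul]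
      rw [show S.X a ∘L (S.X i ∘L W) = (S.X a ∘L S.X i) ∘L W from (comp_assoc _ _ _).symm]
      rw [S.hcomm a i, ContinuousLinearMap.smul_comp, smul_smul, comp_assoc]

lemma prod_lam_eq_one : ∏ i, lam S i = 1 := by
  have h1 : ∏ i, lam S i = ∏ p ∈ (Finset.univ ×ˢ Finset.univ : Finset (Fin d × Fin d)), S.q p.1 p.2 := by
    rw [Finset.prod_product']
    rfl
  rw [h1, ← Finset.diag_union_offDiag, Finset.prod_union (Finset.disjoint_diag_offDiag _)]
  have hdiag : ∏ p ∈ (Finset.univ : Finset (Fin d)).diag, S.q p.1 p.2 = 1 := by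
    rw [Finset.prod_diag]
    simp [S.hq_diag]
  have hoff : ∏ p ∈ (Finset.univ : Finset (Fin d)).offDiag, S.q p.1 p.2 = 1 := by
    refine Finset.prod_involution (fun p _ => (p.2, p.1)) ?_ ?_ ?_ ?_
    · intro p _
      have hn : Complex.normSq (S.q p.2 p.1) = 1 := by
        rw [Complex.normSq_eq_norm_sq, S.hq_mod, one_pow]
      show S.q p.1 p.2 * S.q p.2 p.1 = 1
      rw [S.hq_conj p.1 p.2, mul_comm, Complex.mul_conj, hn, Complex.ofReal_one]
    · intro p hp _
      have hne := (Finset.mem_offDiag.1 hp).2.2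
      intro hcon
      exact hne ((congrArg Prod.fst hcon).symm : p.1 = p.2)
    · intro p hp
      simp only [Finset.mem_offDiag] at hp ⊢
      exact ⟨Finset.mem_univ _, Finset.mem_univ _, fun h => hp.2.2 h.symm⟩
    · intro p _; rfl
  rw [hdiag, hoff, one_mul]

theorem stage2 {V : Type u} [NormedAddCommGroup V] [InnerProductSpace ℂ V]
    (S : QData d H) (e : ℕ → H →ₗ[ℂ] V)
    (hinner : ∀ n m (h k : H), ⟪e n h, e m k⟫ = ⟪(Xp S ^ m) h, (Xp S ^ n) k⟫)
    (hstep : ∀ n (h : H), e (n + 1) (Xp S h) = e n h)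
    (hex : ∀ v : V, ∃ n h, e n h = v)
    (T : Fin d → V →ₗ[ℂ] V)
    (hT : ∀ i n (h : H), T i (e n h) = (conj (lam S i)) ^ n • e n (S.X i h)) :
    ∃ (K : Type u) (_ : NormedAddCommGroup K) (_ : InnerProductSpace ℂ K)
      (_ : CompleteSpace K) (ι : H →ₗᵢ[ℂ] K) (Y : Fin d → K →L[ℂ] K),
      (∀ i, adjoint (Y i) ∘L Y i = 1 ∧ Y i ∘L adjoint (Y i) = 1) ∧
      (∀ i j, Y i ∘L Y j = S.q i j • (Y j ∘L Y i)) ∧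
      (∀ i, ∀ h : H, Y i (ι h) = ι (S.X i h)) ∧
      (∀ h : H, (List.ofFn Y).prod (ι h) = ι ((List.ofFn S.X).prod h)) ∧
      (Submodule.span ℂ
          (⋃ n : ℕ, ⇑((adjoint ((List.ofFn Y).prod)) ^ n) '' Set.range ι)).topologicalClosure
        = ⊤ := by
  classical
  have norme : ∀ n (h : H), ‖e n h‖ = ‖h‖ := by
    intro n h
    have h1 : ⟪e n h, e n h⟫ = ⟪h, h⟫ := by rw [hinner, inner_Xp_pow]
    rw [@norm_eq_sqrt_re_inner ℂ, @norm_eq_sqrt_re_inner ℂ _ _ _ _ h, h1]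
  have hlamn : ∀ i, ‖lam S i‖ = 1 := fun i => by
    rw [lam, norm_prod]; simp [S.hq_mod]
  have hlc : ∀ i, lam S i * conj (lam S i) = 1 := lam_mul_conj S
  have hconjn : ∀ i, ‖conj (lam S i)‖ = 1 := fun i => by
    rw [RCLike.norm_conj]; exact hlamn i
  have Tnorm : ∀ i (v : V), ‖T i v‖ = ‖v‖ := by
    intro i v
    obtain ⟨n, h, rfl⟩ := hex v
    rw [hT, norm_smul, norm_pow, hconjn, one_pow, one_mul, norme, norme, normX]
  let K := Completion V
  have hUI : IsUniformInducing ⇑(Completion.toComplL : V →L[ℂ] K) := by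
    rw [Completion.coe_toComplL]; exact Completion.isUniformInducing_coe V
  have hDR : DenseRange ⇑(Completion.toComplL : V →L[ℂ] K) := by
    rw [Completion.coe_toComplL]; exact Completion.denseRange_coe
  let TL : Fin d → V →ₗᵢ[ℂ] V := fun i => ⟨T i, Tnorm i⟩
  let Yb : Fin d → K →L[ℂ] K := fun i =>
    ((Completion.toComplL : V →L[ℂ] K).comp (TL i).toContinuousLinearMap).extend
      (Completion.toComplL : V →L[ℂ] K)
  have hYb_coe : ∀ i (v : V), Yb i ↑v = ↑(T i v) := by
    intro i v
    have h0 := ContinuousLinearMap.extend_eq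
      ((Completion.toComplL : V →L[ℂ] K).comp (TL i).toContinuousLinearMap)
      hDR hUI v
    simpa [Completion.coe_toComplL, TL] using h0
  have hYbnorm : ∀ i (x : K), ‖Yb i x‖ = ‖x‖ := by
    intro i x
    refine Completion.induction_on x ?_ ?_
    · exact isClosed_eq (continuous_norm.comp (Yb i).continuous) continuous_norm
    · intro v
      rw [hYb_coe, Completion.norm_coe, Completion.norm_coe, Tnorm]
  have hYb1 : ∀ i, adjoint (Yb i) ∘L Yb i = 1 := fun i =>
    (norm_map_iff_adjoint_comp_self (Yb i)).1 (hYbnorm i)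
  have hYb1p : ∀ i x, adjoint (Yb i) (Yb i x) = x := by
    intro i x
    have := congrArg (fun B : K →L[ℂ] K => B x) (hYb1 i); simpa using this
  have hYbsurj : ∀ i, Function.Surjective (Yb i) := by
    intro i
    have hisom : Isometry (Yb i) := AddMonoidHomClass.isometry_of_norm _ (hYbnorm i)
    have hclosed : IsClosed (Set.range (Yb i)) := hisom.isClosedEmbedding.isClosed_range
    have hsub : Set.range ((↑) : V → K) ⊆ Set.range (Yb i) := by
      rintro _ ⟨v, rfl⟩
      obtain ⟨n, h, rfl⟩ := hex v
      obtain ⟨c, W, hcW⟩ := exists_extract S i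
      refine ⟨(c * lam S i ^ (n + 1)) • ((e (n + 1) (W h) : V) : K), ?_⟩
      rw [map_smul, hYb_coe, hT, Completion.coe_smul, smul_smul]
      have hsc : c * lam S i ^ (n + 1) * conj (lam S i) ^ (n + 1) = c := by
        rw [mul_assoc, ← mul_pow, hlc, one_pow, mul_one]
      rw [hsc, ← Completion.coe_smul, ← map_smul]
      congr 1
      rw [← hstep n h, hcW]
      congr 1
    have hall : Set.range (Yb i) = Set.univ := by
      rw [← hclosed.closure_eq]
      exact (Dense.mono hsub Completion.denseRange_coe).closure_eq
    exact Set.range_eq_univ.1 hall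
  have hYb2 : ∀ i, Yb i ∘L adjoint (Yb i) = 1 := by
    intro i
    ext x
    obtain ⟨y, rfl⟩ := hYbsurj i x
    simp only [comp_apply, ContinuousLinearMap.one_apply, hYb1p]
  have hXcomm : ∀ i j (h : H), S.X i (S.X j h) = S.q i j • S.X j (S.X i h) := by
    intro i j h
    have := congrArg (fun B : H →L[ℂ] H => B h) (S.hcomm i j); simpa using this
  have hYbcomm : ∀ i j, Yb i ∘L Yb j = S.q i j • (Yb j ∘L Yb i) := by
    intro i j
    refine ContinuousLinearMap.ext fun x => ?_
    refine Completion.induction_on x ?_ ?_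
    · exact isClosed_eq (Yb i ∘L Yb j).continuous (S.q i j • (Yb j ∘L Yb i)).continuous
    · intro v
      obtain ⟨n, h, rfl⟩ := hex v
      show Yb i (Yb j ↑(e n h)) = S.q i j • Yb j (Yb i ↑(e n h))
      simp only [hYb_coe, hT, map_smul, Completion.coe_smul, smul_smul]
      rw [hXcomm i j h, map_smul, Completion.coe_smul, smul_smul]
      congr 1
      ring
  let eL : H →ₗᵢ[ℂ] V := ⟨e 0, norme 0⟩
  let ι : H →ₗᵢ[ℂ] K := (Completion.toComplₗᵢ : V →ₗᵢ[ℂ] K).comp eL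
  have hι : ∀ h : H, ι h = ((e 0 h : V) : K) := fun h => rfl
  have hext : ∀ i (h : H), Yb i (ι h) = ι (S.X i h) := by
    intro i h
    rw [hι, hι, hYb_coe, hT, pow_zero, one_smul]
  have hprod : ∀ (l : List (Fin d)) (n : ℕ) (h : H),
      ((l.map Yb).prod) ↑(e n h) =
        ((l.map (fun i => (conj (lam S i)) ^ n)).prod) • ((e n ((l.map S.X).prod h) : V) : K) := by
    intro l
    induction l with
    | nil => intro n h; simp
    | cons a t ih =>
      intro n h
      simp only [List.map_cons, List.prod_cons, ContinuousLinearMap.mul_apply]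
      rw [ih, map_smul, hYb_coe, hT, Completion.coe_smul, smul_smul, mul_comm]
  have hLamOne : ∀ n : ℕ,
      ((List.finRange d).map (fun i => (conj (lam S i)) ^ n)).prod = 1 := by
    intro n
    rw [← List.ofFn_eq_map, List.prod_ofFn]
    have : ∀ i : Fin d, (conj (lam S i)) ^ n = ((starRingEnd ℂ) (lam S i)) ^ n := fun _ => rfl
    calc (∏ i, (conj (lam S i)) ^ n) = (∏ i, conj (lam S i)) ^ n := by
          rw [Finset.prod_pow]
      _ = (conj (∏ i, lam S i)) ^ n := by rw [map_prod]
      _ = 1 := by rw [prod_lam_eq_one, map_one, one_pow]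
  set YP := (List.ofFn Yb).prod with hYP_def
  have hYP : ∀ (n : ℕ) (h : H), YP ↑(e n h) = ((e n (Xp S h) : V) : K) := by
    intro n h
    rw [hYP_def, List.ofFn_eq_map, hprod, hLamOne, one_smul, ← List.ofFn_eq_map]
    rfl
  have hYPstep : ∀ (n : ℕ) (h : H), YP ↑(e (n + 1) h) = ((e n h : V) : K) := by
    intro n h
    rw [hYP (n + 1) h, hstep]
  have hYPubits : ∀ a ∈ List.ofFn Yb, adjoint a ∘L a = 1 ∧ a ∘L adjoint a = 1 := by
    intro a ha
    obtain ⟨i, rfl⟩ := List.mem_ofFn.1 ha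
    exact ⟨hYb1 i, hYb2 i⟩
  obtain ⟨hYPu1, hYPu2⟩ := unitary_list_prod (List.ofFn Yb) hYPubits
  have hYPu1p : ∀ x, adjoint YP (YP x) = x := by
    intro x
    have := congrArg (fun B : K →L[ℂ] K => B x) hYPu1; simpa using this
  have hA : ∀ (n : ℕ) (h : H), adjoint YP ((e n h : V) : K) = ((e (n + 1) h : V) : K) := by
    intro n h
    rw [← hYPstep n h, hYPu1p]
  have hApow : ∀ (n : ℕ) (h : H), ((adjoint YP) ^ n) ((e 0 h : V) : K) = ((e n h : V) : K) := by
    intro n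
    induction n with
    | zero => intro h; simp
    | succ m ih =>
      intro h
      rw [pow_succ', ContinuousLinearMap.mul_apply, ih, hA]
  refine ⟨K, inferInstance, inferInstance, inferInstance, ι, Yb,
    fun i => ⟨hYb1 i, hYb2 i⟩, hYbcomm, hext, ?_, ?_⟩
  · intro h
    rw [hι, hι, hYP 0 h]
    rfl
  · apply SetLike.ext'
    rw [Submodule.topologicalClosure_coe, Submodule.top_coe]
    have hsub2 : Set.range ((↑) : V → K) ⊆
        (Submodule.span ℂ (⋃ n : ℕ, ⇑((adjoint YP) ^ n) '' Set.range ι) : Set K) := by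
      rintro _ ⟨v, rfl⟩
      obtain ⟨n, h, rfl⟩ := hex v
      apply Submodule.subset_span
      refine Set.mem_iUnion.2 ⟨n, ⟨ι h, ⟨h, rfl⟩, ?_⟩⟩
      rw [hι, hApow n h]
    exact (Dense.mono hsub2 Completion.denseRange_coe).closure_eq

end QExt

set_option linter.unusedVariables false in
open QExt in
theorem stmt_19 {H : Type u} [NormedAddCommGroup H] [InnerProductSpace ℂ H] [CompleteSpace H]
    (d : ℕ) (hd : 2 ≤ d) (q : Fin d → Fin d → ℂ)
    (hq_mod : ∀ i j, ‖q i j‖ = 1) (hq_diag : ∀ i, q i i = 1)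
    (hq_conj : ∀ i j, q i j = starRingEnd ℂ (q j i))
    (X : Fin d → H →L[ℂ] H)
    (hiso : ∀ i, adjoint (X i) ∘L X i = 1)
    (hcomm : ∀ i j, X i ∘L X j = q i j • (X j ∘L X i)) :
    ∃ (K : Type u) (_ : NormedAddCommGroup K) (_ : InnerProductSpace ℂ K)
      (_ : CompleteSpace K) (ι : H →ₗᵢ[ℂ] K) (Y : Fin d → K →L[ℂ] K),
      -- each Y i is a unitary :
      (∀ i, adjoint (Y i) ∘L Y i = 1 ∧ Y i ∘L adjoint (Y i) = 1) ∧
      -- (Y₁, …, Y_d) is q-commutative :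
      (∀ i j, Y i ∘L Y j = q i j • (Y j ∘L Y i)) ∧
      -- each Y i extends X i :
      (∀ i, ∀ h : H, Y i (ι h) = ι (X i h)) ∧
      -- Y = Y₁ ⋯ Y_d extends X = X₁ ⋯ X_d :
      (∀ h : H, (List.ofFn Y).prod (ι h) = ι ((List.ofFn X).prod h)) ∧
      -- and Y is the minimal unitary extension of X :
      (Submodule.span ℂ
          (⋃ n : ℕ, ⇑((adjoint ((List.ofFn Y).prod)) ^ n) '' Set.range ι)).topologicalClosure
        = ⊤ := by
  let S : QData d H := ⟨q, X, hq_mod, hq_diag, hq_conj, hiso, hcomm⟩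
  letI : NormedAddCommGroup (VV S) := (coreV S).toNormedAddCommGroup
  letI : InnerProductSpace ℂ (VV S) := InnerProductSpace.ofCore (coreV S).toCore
  have hinner : ∀ n m (h k : H),
      (inner ℂ (emb S n h) (emb S m k) : ℂ) = inner ℂ ((Xp S ^ m) h) ((Xp S ^ n) k) := by
    intro n m h k
    exact D2_emb S m k n h
  exact stage2 S (emb S) hinner (emb_step S) (emb_exists S) (Tmap S) (Tmap_emb S)

end QExt
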